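/- For every real κ, ∫_{-∞}^{∞} sech⁵(ξ) cos(κξ) dξ = π(κ⁴ + 10κ² + 9) / (24 cosh(πκ/2)). -/

import Mathlib

open Real MeasureTheory Set

noncomputable def sech (x : ℝ) : ℝ := (Real.cosh x)⁻¹


lemma phi_image : (fun u : ℝ => u / (1 - u)) '' Ioo 0 1 = Ioi 0 := by
  ext t
  constructor
  · rintro ⟨u, ⟨h0, h1⟩, rfl⟩
    exact div_pos h0 (by linarith)
  · intro ht
    refine ⟨t / (1 + t), ⟨div_pos ht (by linarith [mem_Ioi.mp ht]), ?_⟩, ?_⟩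
    · rw [div_lt_one (by linarith [mem_Ioi.mp ht])]; linarith
    · have h1t : (1:ℝ) + t ≠ 0 := by have := mem_Ioi.mp ht; positivity
      field_simp; ring

lemma beta_Ioi {a b : ℂ} (ha : 0 < a.re) (hb : 0 < b.re) :
    ∫ t in Ioi (0:ℝ), (t:ℂ)^(a-1) * ((1 + t : ℝ):ℂ)^(-(a+b)) = Complex.betaIntegral a b := by
  have hderiv : ∀ u ∈ Ioo (0:ℝ) 1, HasDerivWithinAt (fun u : ℝ => u / (1 - u))
      ((1 - u)⁻¹ ^ 2) (Ioo 0 1) u := by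
    intro u hu
    have h : (1:ℝ) - u ≠ 0 := by have := hu.2; intro h'; nlinarith [hu.1]
    have := ((hasDerivAt_id u).div ((hasDerivAt_const u 1).sub (hasDerivAt_id u)) h)
    refine this.hasDerivWithinAt.congr_deriv ?_
    simp only [Pi.sub_apply, id]
    field_simp
    ring
  have hinj : InjOn (fun u : ℝ => u / (1 - u)) (Ioo 0 1) := by
    intro u hu v hv h
    have h1 : (1:ℝ) - u ≠ 0 := by have := hu.2; intro h'; nlinarith [hu.1]
    have h2 : (1:ℝ) - v ≠ 0 := by have := hv.2; intro h'; nlinarith [hv.1]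
    field_simp at h
    linarith
  rw [← phi_image, integral_image_eq_integral_abs_deriv_smul measurableSet_Ioo hderiv hinj,
    Complex.betaIntegral, intervalIntegral.integral_of_le zero_le_one,
    integral_Ioc_eq_integral_Ioo]
  apply setIntegral_congr_fun measurableSet_Ioo
  intro u hu
  have hu0 : (0:ℝ) < u := hu.1
  have hw0 : (0:ℝ) < 1 - u := by linarith [hu.2]
  have hwC : ((1 - u : ℝ) : ℂ) ≠ 0 := by exact_mod_cast hw0.ne'
  have harg : ((1 - u : ℝ) : ℂ).arg ≠ π := by
    rw [Complex.arg_ofReal_of_nonneg hw0.le]; exact (by positivity : (0:ℝ) < π).ne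
  have h1 : (1 : ℝ) + u / (1 - u) = (1 - u)⁻¹ := by field_simp; ring
  have h2 : ((((1 - u)⁻¹ : ℝ)) : ℂ) ^ (-(a + b)) = ((1 - u : ℝ) : ℂ) ^ (a + b) := by
    rw [Complex.ofReal_inv, Complex.inv_cpow _ _ harg, Complex.cpow_neg, inv_inv]
  have h3 : ((u / (1 - u) : ℝ) : ℂ) ^ (a - 1)
      = (u : ℂ) ^ (a - 1) * (((1 - u : ℝ) : ℂ) ^ (a - 1))⁻¹ := by
    rw [div_eq_mul_inv, Complex.ofReal_mul,
      Complex.mul_cpow_ofReal_nonneg hu0.le (by positivity),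
      Complex.ofReal_inv, Complex.inv_cpow _ _ harg]
  have h4 : |(1 - u)⁻¹ ^ 2| = (1 - u)⁻¹ ^ 2 := abs_of_pos (by positivity)
  simp only [h1, h2, h3, h4]
  have hcp : ∀ z w : ℂ, ((1 - u : ℝ) : ℂ) ^ z * (((1 - u : ℝ) : ℂ) ^ w)⁻¹
      = ((1 - u : ℝ) : ℂ) ^ (z - w) := fun z w => by
    rw [← Complex.cpow_neg, ← Complex.cpow_add _ _ hwC]; ring_nf
  have hW2 : (((1 - u)⁻¹ ^ 2 : ℝ) : ℂ) = (((1 - u : ℝ) : ℂ) ^ (2 : ℂ))⁻¹ := by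
    rw [Complex.ofReal_pow, Complex.ofReal_inv, inv_pow, Complex.cpow_two]
  have h6 : (1 - (u:ℂ)) = ((1 - u : ℝ) : ℂ) := by push_cast; ring
  rw [Complex.real_smul, hW2, h6]
  calc (((1 - u : ℝ) : ℂ) ^ (2:ℂ))⁻¹ *
        ((u:ℂ) ^ (a - 1) * (((1 - u : ℝ) : ℂ) ^ (a - 1))⁻¹ * ((1 - u : ℝ) : ℂ) ^ (a + b))
      = (u:ℂ) ^ (a - 1) * (((1 - u : ℝ) : ℂ) ^ (a + b) * (((1 - u : ℝ) : ℂ) ^ (a - 1))⁻¹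
          * (((1 - u : ℝ) : ℂ) ^ (2:ℂ))⁻¹) := by ring
    _ = (u:ℂ) ^ (a - 1) * ((1 - u : ℝ) : ℂ) ^ (b - 1) := by
        rw [hcp (a+b) (a-1), hcp _ (2:ℂ)]
        congr 1
        ring

lemma key_beta (κ : ℝ) :
    (16:ℂ) * Complex.betaIntegral ((5 + Complex.I*κ)/2) ((5 - Complex.I*κ)/2)
      = ((Real.pi * (κ^4+10*κ^2+9) / (24 * Real.cosh (Real.pi*κ/2)) : ℝ) : ℂ) := by
  set z : ℂ := Complex.I * κ with hz
  have hzre : z.re = 0 := by simp [hz]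
  set A : ℂ := (1+z)/2 with hA
  have hAre : A.re = 1/2 := by rw [hA]; simp [Complex.div_re, hzre]
  have hA0 : A ≠ 0 := fun h => by simp [h] at hAre
  have hA1 : A + 1 ≠ 0 := fun h => by
    have := congrArg Complex.re h
    simp [hAre] at this; linarith
  set B : ℂ := (1-z)/2 with hB
  have hBA : B = 1 - A := by rw [hB, hA]; ring
  have hBre : B.re = 1/2 := by rw [hBA, Complex.sub_re, Complex.one_re, hAre]; norm_num
  have hB0 : B ≠ 0 := fun h => by simp [h] at hBre
  have hB1 : B + 1 ≠ 0 := fun h => by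
    have := congrArg Complex.re h
    simp [hBre] at this; linarith
  have ha : (5 + z)/2 = A + 1 + 1 := by rw [hA]; ring
  have hb : (5 - z)/2 = B + 1 + 1 := by rw [hB]; ring
  have hGa : Complex.Gamma ((5+z)/2) = (A+1) * A * Complex.Gamma A := by
    rw [ha, Complex.Gamma_add_one _ hA1, Complex.Gamma_add_one _ hA0]; ring
  have hGb : Complex.Gamma ((5-z)/2) = (B+1) * B * Complex.Gamma B := by
    rw [hb, Complex.Gamma_add_one _ hB1, Complex.Gamma_add_one _ hB0]; ring
  have hrefl : Complex.Gamma A * Complex.Gamma B = (π:ℂ) / Complex.sin ((π:ℂ) * A) := by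
    rw [hBA]; exact Complex.Gamma_mul_Gamma_one_sub A
  have hsin : Complex.sin ((π:ℂ) * A) = ((Real.cosh (Real.pi*κ/2) : ℝ) : ℂ) := by
    have h1 : (π:ℂ) * A = (π:ℂ)/2 + ((Real.pi*κ/2 : ℝ):ℂ) * Complex.I := by
      rw [hA, hz]; push_cast; ring
    rw [h1, Complex.sin_add, Complex.sin_pi_div_two, Complex.cos_pi_div_two,
      Complex.cos_mul_I, Complex.ofReal_cosh]
    ring
  have hsum : (5 + z)/2 + (5 - z)/2 = ((4:ℕ):ℂ) + 1 := by push_cast; ring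
  have hbeta : Complex.Gamma ((5+z)/2) * Complex.Gamma ((5-z)/2)
      = Complex.Gamma ((5+z)/2 + (5-z)/2)
        * Complex.betaIntegral ((5+z)/2) ((5-z)/2) := by
    apply Complex.Gamma_mul_Gamma_eq_betaIntegral
    · simp [Complex.div_re, hzre]
    · simp [Complex.div_re, hzre]
  have hG5 : Complex.Gamma ((5+z)/2 + (5-z)/2) = 24 := by
    rw [hsum, Complex.Gamma_nat_eq_factorial]; norm_num [Nat.factorial]
  have hconst : (A+1) * A * ((B+1) * B) = ((κ^4 + 10*κ^2 + 9 : ℝ):ℂ) / 16 := by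
    rw [hA, hB, hz]
    have hI : Complex.I^2 = -1 := Complex.I_sq
    push_cast
    field_simp
    have hI4 : Complex.I^4 = 1 := by
      have : Complex.I^4 = (Complex.I^2)^2 := by ring
      rw [this, hI]; norm_num
    ring_nf
    simp only [hI, hI4]
    ring
  have hcoshne : ((Real.cosh (Real.pi*κ/2) : ℝ) : ℂ) ≠ 0 := by
    exact_mod_cast (Real.cosh_pos (x := Real.pi*κ/2)).ne'
  have hsinne : Complex.sin ((π:ℂ) * A) ≠ 0 := by rw [hsin]; exact hcoshne
  have h24 : (24:ℂ) ≠ 0 := by norm_num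
  have := hbeta
  rw [hGa, hGb, hG5] at this
  have hbval : Complex.betaIntegral ((5+z)/2) ((5-z)/2)
      = (A+1) * A * ((B+1) * B) * ((π:ℂ) / Complex.sin ((π:ℂ) * A)) / 24 := by
    have hrefl' : Complex.Gamma A * Complex.Gamma B * Complex.sin ((π:ℂ) * A) = (π:ℂ) := by
      field_simp [hsinne] at hrefl
      linear_combination hrefl
    rw [← hrefl]
    linear_combination (-1/24:ℂ) * this
  rw [hbval, hconst, hsin]
  push_cast
  field_simp


lemma cpow_posreal {x : ℝ} (hx : 0 < x) (w : ℂ) :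
    (x:ℂ) ^ w = Complex.exp (↑(Real.log x) * w) := by
  rw [Complex.cpow_def_of_ne_zero (by exact_mod_cast hx.ne'), ← Complex.ofReal_log hx.le]

lemma sech_eq (x : ℝ) : sech x = 2 * Real.exp x / (Real.exp x ^ 2 + 1) := by
  have h := Real.cosh_eq x
  have h2 : Real.exp (-x) = (Real.exp x)⁻¹ := by rw [Real.exp_neg]
  rw [sech, h, h2]
  have := Real.exp_pos x
  field_simp

lemma stepA (κ : ℝ) :
    (∫ ξ : ℝ, ((sech ξ : ℝ):ℂ)^5 * Complex.exp (↑κ * ↑ξ * Complex.I))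
      = ∫ t in Ioi (0:ℝ),
          32 * (t:ℂ)^((4:ℂ) + Complex.I*↑κ) / (1+(t:ℂ)^2)^5 := by
  have himg : Real.exp '' univ = Ioi (0:ℝ) := by rw [Set.image_univ, Real.range_exp]
  rw [← himg, integral_image_eq_integral_abs_deriv_smul MeasurableSet.univ
    (fun x _ => (Real.hasDerivAt_exp x).hasDerivWithinAt) Real.exp_injective.injOn,
    setIntegral_univ]
  apply integral_congr_ae
  filter_upwards with x
  have he : (0:ℝ) < Real.exp x := Real.exp_pos x
  have heC : ((Real.exp x : ℝ):ℂ) ≠ 0 := by exact_mod_cast he.ne'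
  have hd : ((Real.exp x ^ 2 + 1 : ℝ):ℂ) ≠ 0 := by
    exact_mod_cast (by positivity : (0:ℝ) < Real.exp x ^ 2 + 1).ne'
  have hcpow : ((Real.exp x : ℝ):ℂ) ^ ((4:ℂ) + Complex.I*↑κ)
      = Complex.exp (↑x * 4) * Complex.exp (↑x * (Complex.I * ↑κ)) := by
    rw [cpow_posreal he, Real.log_exp, ← Complex.exp_add]
    congr 1
    ring
  rw [abs_of_pos he, hcpow, sech_eq]
  have hex : Complex.exp (↑x * 4) = ((Real.exp x : ℝ):ℂ)^4 := by
    rw [Complex.ofReal_exp, ← Complex.exp_nat_mul]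
    congr 1
    ring
  have hex2 : Complex.exp (↑κ * ↑x * Complex.I) = Complex.exp (↑x * (Complex.I * ↑κ)) := by
    congr 1
    ring
  rw [hex, hex2]
  push_cast
  rw [Complex.real_smul]
  push_cast
  field_simp
  ring

lemma stepB (κ : ℝ) :
    (∫ t in Ioi (0:ℝ), 32 * (t:ℂ)^((4:ℂ) + Complex.I*↑κ) / (1+(t:ℂ)^2)^5)
      = (16:ℂ) * Complex.betaIntegral (((5:ℂ) + Complex.I*↑κ)/2) (((5:ℂ) - Complex.I*↑κ)/2) := by
  set a := ((5:ℂ) + Complex.I*↑κ)/2 with hadef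
  set b := ((5:ℂ) - Complex.I*↑κ)/2 with hbdef
  have hzre : (Complex.I*(κ:ℂ)).re = 0 := by simp
  have ha : 0 < a.re := by rw [hadef]; simp [Complex.div_re, Complex.add_re, hzre]
  have hb : 0 < b.re := by rw [hbdef]; simp [Complex.div_re, Complex.sub_re, hzre]
  rw [← beta_Ioi ha hb, ← integral_const_mul,
    ← integral_comp_rpow_Ioi_of_pos (p := 2) two_pos
      (g := fun s => (16:ℂ) * ((s:ℂ)^(a-1) * ((1 + s : ℝ):ℂ)^(-(a+b))))]
  apply setIntegral_congr_fun measurableSet_Ioi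
  intro x hx
  have hx0 : (0:ℝ) < x := hx
  have hab : a + b = 5 := by rw [hadef, hbdef]; ring
  have hx2 : x ^ (2:ℝ) = x^2 := by rw [← Real.rpow_natCast x 2]; norm_num
  have h1x2 : (0:ℝ) < 1 + x^2 := by positivity
  have hpow5 : ((1 + x^(2:ℝ) : ℝ):ℂ)^(-(a+b)) = (((1 + x^2 : ℝ):ℂ)^(5:ℕ))⁻¹ := by
    rw [hx2, hab, Complex.cpow_neg]
    congr 1
    rw [(by norm_num : (5:ℂ) = ((5:ℕ):ℂ)), Complex.cpow_natCast]
  have hlog : (x:ℂ) = Complex.exp ↑(Real.log x) := by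
    rw [← Complex.ofReal_exp, Real.exp_log hx0]
  have hxx : ((x^(2:ℝ) : ℝ):ℂ)^(a-1) = Complex.exp (↑(Real.log x) * (2*(a-1))) := by
    rw [hx2, cpow_posreal (by positivity), Real.log_pow]
    push_cast
    congr 1
    ring
  have hx4 : (x:ℂ)^((4:ℂ) + Complex.I*↑κ)
      = Complex.exp (↑(Real.log x) * ((4:ℂ) + Complex.I*↑κ)) := cpow_posreal hx0 _
  have hsmul : (2 * x ^ ((2:ℝ) - 1)) = 2 * x := by rw [(by norm_num : (2:ℝ)-1 = 1), Real.rpow_one]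
  beta_reduce
  rw [hsmul]
  rw [hpow5, hxx, Complex.real_smul]
  have hcast : ((1:ℝ) + (x:ℝ)^2 : ℝ) = 1 + x^2 := rfl
  have key : Complex.exp (↑(Real.log x) * ((4:ℂ) + Complex.I*↑κ))
      = (2*x : ℂ) * Complex.exp (↑(Real.log x) * (2*(a-1))) * (16/32) := by
    rw [hadef]
    have h2a : (2 : ℂ) * (((5:ℂ) + Complex.I*↑κ)/2 - 1) = (3:ℂ) + Complex.I*↑κ := by ring
    rw [h2a]
    have : ((4:ℂ) + Complex.I*↑κ) = 1 + ((3:ℂ) + Complex.I*↑κ) := by ring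
    rw [this, mul_add, Complex.exp_add, mul_one, ← hlog]
    ring
  rw [hx4, key]
  push_cast
  have hdne : ((1:ℂ) + (x:ℂ)^2)^5 ≠ 0 := by
    apply pow_ne_zero
    exact_mod_cast (by positivity : (0:ℝ) < 1 + x^2).ne'
  field_simp


lemma sech_pos (x : ℝ) : 0 < sech x := inv_pos.mpr (Real.cosh_pos x)

lemma sech_le (x : ℝ) : sech x ≤ 2 * Real.exp (-|x|) := by
  rw [sech, Real.exp_neg]
  have h1 : Real.exp |x| ≤ 2 * Real.cosh x := by
    rw [Real.cosh_eq]
    rcases abs_cases x with ⟨h, _⟩ | ⟨h, _⟩ <;> rw [h] <;>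
      nlinarith [Real.exp_pos x, Real.exp_pos (-x)]
  rw [inv_le_comm₀ (Real.cosh_pos x) (by positivity), mul_inv, inv_inv]
  nlinarith [Real.exp_pos |x|]

lemma exp_abs_integrable : Integrable (fun x : ℝ => 32 * Real.exp (-5 * |x|)) := by
  apply Integrable.const_mul
  have h1 : IntegrableOn (fun x : ℝ => Real.exp (-5 * x)) (Ioi 0) :=
    exp_neg_integrableOn_Ioi 0 (by norm_num)
  have h2 : IntegrableOn (fun x : ℝ => Real.exp (-5 * |x|)) (Ioi 0) := by
    apply h1.congr_fun (fun x hx => by rw [abs_of_pos hx]) measurableSet_Ioi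
  have hmp : MeasurePreserving (Neg.neg : ℝ → ℝ)
      (volume.restrict (Iio 0)) (volume.restrict (Ioi 0)) := by
    constructor
    · exact measurable_neg
    · rw [← (Measure.measurePreserving_neg (volume : Measure ℝ)).map_eq,
        Measure.restrict_map measurable_neg measurableSet_Ioi,
        (Measure.measurePreserving_neg (volume : Measure ℝ)).map_eq]
      congr 1
      ext x
      simp
  have h3 : IntegrableOn (fun x : ℝ => Real.exp (-5 * |x|)) (Iio 0) := by
    have h4 := hmp.integrable_comp_emb (measurableEmbedding_neg : MeasurableEmbedding (Neg.neg : ℝ → ℝ)) |>.mpr h2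
    have : ((fun x : ℝ => Real.exp (-5 * |x|)) ∘ Neg.neg) = fun x : ℝ => Real.exp (-5 * |x|) := by
      funext x; simp [Function.comp]
    rwa [this] at h4
  rw [← integrableOn_univ, ← Set.Iio_union_Ici (a := (0:ℝ))]
  refine h3.union ?_
  rw [integrableOn_Ici_iff_integrableOn_Ioi]
  exact h2

theorem sech5_cos_integral (κ : ℝ) :
    ∫ ξ : ℝ, (sech ξ) ^ 5 * Real.cos (κ * ξ)
      = Real.pi * (κ ^ 4 + 10 * κ ^ 2 + 9) / (24 * Real.cosh (Real.pi * κ / 2)) := by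
  have hcont : Continuous (fun ξ : ℝ => ((sech ξ : ℝ):ℂ)^5 * Complex.exp (↑κ*↑ξ*Complex.I)) := by
    apply Continuous.mul
    · exact (Complex.continuous_ofReal.comp
        (Real.continuous_cosh.inv₀ (fun x => (Real.cosh_pos x).ne'))).pow 5
    · exact Complex.continuous_exp.comp (by continuity)
  have hf_int : Integrable (fun ξ : ℝ => ((sech ξ : ℝ):ℂ)^5 * Complex.exp (↑κ*↑ξ*Complex.I)) := by
    apply Integrable.mono' exp_abs_integrable hcont.aestronglyMeasurable
    filter_upwards with ξ
    have h1 : (↑κ*↑ξ*Complex.I : ℂ) = ((κ*ξ : ℝ):ℂ)*Complex.I := by push_cast; ring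
    rw [norm_mul, norm_pow, h1, Complex.norm_exp_ofReal_mul_I, mul_one, Complex.norm_real,
      Real.norm_eq_abs, abs_of_pos (sech_pos ξ)]
    calc sech ξ ^ 5 ≤ (2 * Real.exp (-|ξ|))^5 :=
          pow_le_pow_left₀ (sech_pos ξ).le (sech_le ξ) 5
      _ = 32 * Real.exp (-5 * |ξ|) := by
          rw [mul_pow, ← Real.exp_nat_mul]
          norm_num
  have hre : ∀ ξ : ℝ, (((sech ξ : ℝ):ℂ)^5 * Complex.exp (↑κ*↑ξ*Complex.I)).re
      = sech ξ ^ 5 * Real.cos (κ * ξ) := by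
    intro ξ
    have h1 : (↑κ*↑ξ*Complex.I : ℂ) = ((κ*ξ : ℝ):ℂ)*Complex.I := by push_cast; ring
    have h2 : ((sech ξ : ℝ):ℂ)^5 = ((sech ξ^5 : ℝ):ℂ) := by push_cast; ring
    rw [h1, h2]
    simp only [Complex.mul_re, Complex.ofReal_re, Complex.ofReal_im,
      Complex.exp_ofReal_mul_I_re, zero_mul, sub_zero]
  calc (∫ ξ : ℝ, sech ξ ^ 5 * Real.cos (κ * ξ))
      = ∫ ξ : ℝ, (((sech ξ : ℝ):ℂ)^5 * Complex.exp (↑κ*↑ξ*Complex.I)).re := by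
        simp_rw [hre]
    _ = (∫ ξ : ℝ, ((sech ξ : ℝ):ℂ)^5 * Complex.exp (↑κ*↑ξ*Complex.I)).re :=
        integral_re hf_int
    _ = Real.pi * (κ ^ 4 + 10 * κ ^ 2 + 9) / (24 * Real.cosh (Real.pi * κ / 2)) := by
        rw [stepA, stepB, key_beta, Complex.ofReal_re]
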